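/- The function S ↦ −Real.log (S.det) is strictly convex on the set of n×n real positive definite matrices: the set {S : Matrix (Fin n) (Fin n) ℝ | S.PosDef} is convex, and for distinct positive definite S₁, S₂ and t ∈ (0,1), −log det(t•S₁ + (1−t)•S₂) < −t·log det S₁ − (1−t)·log det S₂. -/

import Mathlib

open Matrix

lemma posDef_smul' {n : ℕ} {A : Matrix (Fin n) (Fin n) ℝ} {c : ℝ} (hA : A.PosDef)
    (hc : 0 < c) : (c • A).PosDef := by
  refine PosDef.of_dotProduct_mulVec_pos ?_ (fun x hx => ?_)
  · unfold Matrix.IsHermitian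
    rw [conjTranspose_smul, hA.1.eq, star_trivial]
  · rw [smul_mulVec, dotProduct_smul, smul_eq_mul]
    exact mul_pos hc (hA.dotProduct_mulVec_pos hx)

lemma posDef_conj' {n : ℕ} {N B : Matrix (Fin n) (Fin n) ℝ} (hN : N.PosDef)
    (hB : IsUnit B) : (Bᴴ * N * B).PosDef := by
  refine PosDef.of_dotProduct_mulVec_pos (isHermitian_conjTranspose_mul_mul B hN.1) fun x hx => ?_
  have hx' : B *ᵥ x ≠ 0 := by
    intro h
    exact hx <| (Matrix.mulVec_injective_iff_isUnit.mpr hB)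
      (show B *ᵥ x = B *ᵥ 0 by simp [h])
  simpa only [star_mulVec, dotProduct_mulVec, vecMul_vecMul] using hN.dotProduct_mulVec_pos hx'

/-- The set of positive definite matrices is convex, and `S ↦ −log det S` is
strictly convex on it. -/
theorem neg_log_det_strictly_convex (n : ℕ) :
    Convex ℝ {S : Matrix (Fin n) (Fin n) ℝ | S.PosDef} ∧
      ∀ S₁ S₂ : Matrix (Fin n) (Fin n) ℝ, S₁.PosDef → S₂.PosDef → S₁ ≠ S₂ →
        ∀ t : ℝ, 0 < t → t < 1 →
          -Real.log (t • S₁ + (1 - t) • S₂).det <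
            -(t * Real.log S₁.det) - (1 - t) * Real.log S₂.det := by
  constructor
  · intro S₁ hS₁ S₂ hS₂ a b ha hb hab
    rcases ha.eq_or_lt with ha0 | ha'
    · have hb1 : b = 1 := by linarith
      simp only [Set.mem_setOf_eq, ← ha0, hb1, zero_smul, one_smul, zero_add]
      exact hS₂
    rcases hb.eq_or_lt with hb0 | hb'
    · have ha1 : a = 1 := by linarith
      simp only [Set.mem_setOf_eq, ← hb0, ha1, zero_smul, one_smul, add_zero]
      exact hS₁
    exact (posDef_smul' hS₁ ha').add (posDef_smul' hS₂ hb')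
  · intro S₁ S₂ hS₁ hS₂ hne t ht ht1
    -- square root of S₁
    open scoped MatrixOrder in set R := CFC.sqrt S₁ with hRdef
    have hS₁eq : R * R = S₁ := by open scoped MatrixOrder in exact CFC.sqrt_mul_sqrt_self S₁ hS₁.posSemidef.nonneg
    have hRH : R.IsHermitian := by open scoped MatrixOrder in exact (CFC.sqrt_nonneg S₁).posSemidef.1
    have hdet : R.det * R.det = S₁.det := by
      have := congrArg Matrix.det hS₁eq
      rwa [det_mul] at this
    have hS₁pos : 0 < S₁.det := hS₁.det_pos
    have hS₂pos : 0 < S₂.det := hS₂.det_pos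
    have hRdet : R.det ≠ 0 := by
      intro h; rw [h, mul_zero] at hdet; exact hS₁pos.ne (hdet)
    have hRunit : IsUnit R := (isUnit_iff_isUnit_det R).2 hRdet.isUnit
    set B := R⁻¹ with hBdef
    have hRB : R * B = 1 := mul_nonsing_inv R ((isUnit_iff_isUnit_det R).1 hRunit)
    have hBR : B * R = 1 := nonsing_inv_mul R ((isUnit_iff_isUnit_det R).1 hRunit)
    have hBH : B.IsHermitian := hRH.inv
    have hBunit : IsUnit B := (Matrix.isUnit_nonsing_inv_iff).2 hRunit
    set M := B * S₂ * B with hMdef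
    have hM : M.PosDef := by
      have := posDef_conj' hS₂ hBunit
      rwa [hBH.eq] at this
    have hS₂eq : R * M * R = S₂ := by
      have h1 : R * (B * S₂ * B) * R = (R * B) * S₂ * (B * R) := by
        noncomm_ring
      rw [hMdef, h1, hRB, hBR, one_mul, mul_one]
    -- eigenvalues of M
    have hMH : M.IsHermitian := hM.1
    set μ := hMH.eigenvalues with hμdef
    have hμpos : ∀ i, 0 < μ i := hM.eigenvalues_pos
    set U := (hMH.eigenvectorUnitary : Matrix (Fin n) (Fin n) ℝ) with hUdef
    have hspec : M = U * diagonal μ * star U := by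
      have := hMH.spectral_theorem
      simpa [RCLike.ofReal_real_eq_id, Function.id_comp] using this
    have hUU : U * star U = 1 :=
      Matrix.mem_unitaryGroup_iff.mp (hMH.eigenvectorUnitary).2
    set N : Matrix (Fin n) (Fin n) ℝ := t • 1 + (1 - t) • M with hNdef
    set E : Matrix (Fin n) (Fin n) ℝ := t • 1 + (1 - t) • diagonal μ with hEdef
    have hNE : U * E * star U = N := by
      rw [hEdef, hNdef]
      simp only [Matrix.mul_add, Matrix.add_mul, Matrix.mul_smul, Matrix.smul_mul,
        Matrix.mul_one]
      rw [hUU, ← hspec]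
    have hE : E = diagonal (fun i => t + (1 - t) * μ i) := by
      ext i j
      rcases eq_or_ne i j with rfl | h
      · simp [hEdef, Matrix.one_apply_eq, Matrix.diagonal_apply_eq]
      · simp [hEdef, Matrix.one_apply_ne h, Matrix.diagonal_apply_ne _ h]
    have hEdet : E.det = ∏ i, (t + (1 - t) * μ i) := by
      rw [hE, det_diagonal]
    have hNdet : N.det = ∏ i, (t + (1 - t) * μ i) := by
      rw [← hNE, det_mul, det_mul, hEdet]
      have h1 : U.det * (star U).det = 1 := by
        rw [← det_mul, hUU, det_one]
      linear_combination (∏ i, (t + (1 - t) * μ i)) * h1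
    have hMdet : M.det = ∏ i, μ i := by
      simpa [RCLike.ofReal_real_eq_id] using hMH.det_eq_prod_eigenvalues
    have hS₂det : S₂.det = S₁.det * ∏ i, μ i := by
      rw [← hS₂eq, det_mul, det_mul, hMdet, ← hdet]; ring
    -- determinant of the combination
    have hcombo : t • S₁ + (1 - t) • S₂ = R * N * R := by
      rw [hNdef, ← hS₁eq, ← hS₂eq]
      simp only [Matrix.mul_add, Matrix.add_mul, Matrix.mul_smul, Matrix.smul_mul,
        Matrix.mul_one, Matrix.one_mul]
    have hcombodet : (t • S₁ + (1 - t) • S₂).det = S₁.det * ∏ i, (t + (1 - t) * μ i) := by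
      rw [hcombo, det_mul, det_mul, hNdet, ← hdet]
      ring
    -- positivity
    have hterm : ∀ i, 0 < t + (1 - t) * μ i := fun i =>
      add_pos ht (mul_pos (by linarith) (hμpos i))
    -- logs
    have hlogcombo : Real.log (t • S₁ + (1 - t) • S₂).det =
        Real.log S₁.det + ∑ i, Real.log (t + (1 - t) * μ i) := by
      rw [hcombodet, Real.log_mul hS₁pos.ne' (Finset.prod_pos (fun i _ => hterm i)).ne',
        Real.log_prod]
      intro i _; exact (hterm i).ne'
    have hlogS₂ : Real.log S₂.det = Real.log S₁.det + ∑ i, Real.log (μ i) := by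
      rw [hS₂det, Real.log_mul hS₁pos.ne' (Finset.prod_pos (fun i _ => hμpos i)).ne',
        Real.log_prod]
      intro i _; exact (hμpos i).ne'
    -- some eigenvalue differs from 1
    have hex : ∃ i, μ i ≠ 1 := by
      by_contra h
      push_neg at h
      have hdiag : diagonal μ = 1 := by
        have : μ = fun _ => 1 := funext h
        rw [this]
        exact Matrix.diagonal_one
      have hM1 : M = 1 := by rw [hspec, hdiag, Matrix.mul_one, hUU]
      apply hne
      rw [← hS₁eq, ← hS₂eq, hM1, Matrix.mul_one]
    obtain ⟨i₀, hi₀⟩ := hex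
    -- strict concavity of log
    have hweak : ∀ i ∈ Finset.univ,
        t * Real.log 1 + (1 - t) * Real.log (μ i) ≤ Real.log (t * 1 + (1 - t) * μ i) := by
      intro i _
      have := strictConcaveOn_log_Ioi.concaveOn.2 (Set.mem_Ioi.mpr one_pos)
        (Set.mem_Ioi.mpr (hμpos i)) ht.le (by linarith : (0:ℝ) ≤ 1 - t) (by ring)
      simpa [smul_eq_mul] using this
    have hstrict : t * Real.log 1 + (1 - t) * Real.log (μ i₀) <
        Real.log (t * 1 + (1 - t) * μ i₀) := by
      have := strictConcaveOn_log_Ioi.2 (Set.mem_Ioi.mpr one_pos)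
        (Set.mem_Ioi.mpr (hμpos i₀)) (fun h => hi₀ h.symm) ht
        (by linarith : (0:ℝ) < 1 - t) (by ring)
      simpa [smul_eq_mul] using this
    have hsum : ∑ i, (t * Real.log 1 + (1 - t) * Real.log (μ i)) <
        ∑ i, Real.log (t * 1 + (1 - t) * μ i) :=
      Finset.sum_lt_sum hweak ⟨i₀, Finset.mem_univ i₀, hstrict⟩
    have hL : ∑ i, (t * Real.log 1 + (1 - t) * Real.log (μ i)) =
        (1 - t) * ∑ i, Real.log (μ i) := by
      simp [Real.log_one, Finset.mul_sum]
    have hR' : ∑ i, Real.log (t * 1 + (1 - t) * μ i) =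
        ∑ i, Real.log (t + (1 - t) * μ i) := by
      simp [mul_one]
    rw [hL, hR'] at hsum
    rw [hlogcombo, hlogS₂]
    nlinarith [hsum]
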